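/- Let x1, x0 be Bessel sequences in X and u0 a Bessel sequence in U with synthesis operators Ξ1, Ξ0, Υ0, and suppose the data-generation assumption holds. Fix γ ∈ (0,1). Then the following are equivalent. (i) The data (x1,x0,u0) are informative for stabilization with decay rate γ, and there exist a constant c ≥ 0 and a stabilizing gain K ∈ L(X,U) with decay rate γ such that (Ξ0 + K*Υ0)*(Ξ0 + K*Υ0) ≤ c² (Ξ0*Ξ0 + Υ0*Υ0)² as operators on ℓ²(ℕ), where K* ∈ L(U,X) is the Hilbert-space adjoint of K. (ii) The sequence x0 is a frame for X, and there exists a right inverse Ξ0† ∈ L(X, ℓ²(ℕ)) of Ξ0 (Ξ0 Ξ0† = I) such that Ξ1 Ξ0† is power stable with decay rate γ. -/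

import Mathlib

noncomputable section
open ContinuousLinearMap
open scoped ENNReal
set_option maxHeartbeats 1000000

/-- `ℓ²(ℕ)`: the Hilbert space of square-summable complex sequences. -/
abbrev l2 : Type := lp (fun _ : ℕ => ℂ) 2

/-- `η` is a Bessel sequence in `Y`. -/
def Bessel {Y : Type} [NormedAddCommGroup Y] [InnerProductSpace ℂ Y] (η : ℕ → Y) : Prop :=
  ∃ α : ℝ, 0 < α ∧ ∀ y : Y, ∑' k : ℕ, ‖(inner ℂ y (η k) : ℂ)‖ ^ 2 ≤ α * ‖y‖ ^ 2

/-- `η` is a frame for `Y`. -/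
def IsFrame {Y : Type} [NormedAddCommGroup Y] [InnerProductSpace ℂ Y] (η : ℕ → Y) : Prop :=
  ∃ α β : ℝ, 0 < α ∧ 0 < β ∧ ∀ y : Y,
    β * ‖y‖ ^ 2 ≤ ∑' k : ℕ, ‖(inner ℂ y (η k) : ℂ)‖ ^ 2 ∧
      ∑' k : ℕ, ‖(inner ℂ y (η k) : ℂ)‖ ^ 2 ≤ α * ‖y‖ ^ 2

/-- `T` is the synthesis operator associated with `η`: `T w = ∑ₖ wₖ • ηₖ`. -/
def IsSynthesis {Y : Type} [NormedAddCommGroup Y] [InnerProductSpace ℂ Y] (η : ℕ → Y)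
    (T : l2 →L[ℂ] Y) : Prop :=
  ∀ w : l2, HasSum (fun k : ℕ => w k • η k) (T w)

/-! ### Auxiliary lemmas -/

lemma syn_single {Y : Type} [NormedAddCommGroup Y] [InnerProductSpace ℂ Y] {η : ℕ → Y}
    {T : l2 →L[ℂ] Y} (hT : IsSynthesis η T) (k : ℕ) : T (lp.single 2 k 1) = η k := by
  refine (hT (lp.single 2 k 1)).unique ?_
  have h : (fun j : ℕ => (lp.single 2 k (1 : ℂ) : l2) j • η j)
      = fun j => if j = k then η k else 0 := by
    funext j
    by_cases hj : j = k
    · subst hj; simp [lp.single_apply_self]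
    · simp [lp.single_apply_ne _ _ _ hj, hj]
  rw [h]
  exact hasSum_ite_eq k (η k)

/-- Douglas-type factorization. -/
lemma douglas_factor {E F W : Type}
    [NormedAddCommGroup E] [InnerProductSpace ℂ E] [CompleteSpace E]
    [NormedAddCommGroup F] [InnerProductSpace ℂ F] [CompleteSpace F]
    [NormedAddCommGroup W] [NormedSpace ℂ W] [CompleteSpace W]
    (H : E →L[ℂ] F) (Hd : F →L[ℂ] E) (Md : F →L[ℂ] W) (c : ℝ)
    (hadj : ∀ (y : F) (w : E), (inner ℂ (Hd y) w : ℂ) = inner ℂ y (H w))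
    (hker : ∀ y : F, Hd y = 0 → Md y = 0)
    (hran : ∀ w : E, ‖Md (H w)‖ ≤ c * ‖Hd (H w)‖) :
    ∃ Φ : E →L[ℂ] W, ∀ y : F, Φ (Hd y) = Md y := by
  classical
  set C : Submodule ℂ F := (LinearMap.range (H : E →ₗ[ℂ] F)).topologicalClosure with hC
  -- global inequality
  have hglob : ∀ y : F, ‖Md y‖ ≤ c * ‖Hd y‖ := by
    intro y
    haveI : CompleteSpace C := (Submodule.isClosed_topologicalClosure _).completeSpace_coe
    set h : F := (C.orthogonalProjection y : F) with hh
    have hzmem : y - h ∈ Cᗮ := Submodule.sub_starProjection_mem_orthogonal (K := C) y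
    have hHdz : Hd (y - h) = 0 := by
      have h1 : (inner ℂ (Hd (y - h)) (Hd (y - h)) : ℂ) = 0 := by
        rw [hadj]
        have hm : H (Hd (y - h)) ∈ C :=
          Submodule.le_topologicalClosure _ (LinearMap.mem_range_self _ _)
        have h0 := (Submodule.mem_orthogonal C (y - h)).mp hzmem _ hm
        rw [← inner_conj_symm, h0, map_zero]
      exact inner_self_eq_zero.mp h1
    have hMdz : Md (y - h) = 0 := hker _ hHdz
    have hSclosed : IsClosed {p : F | ‖Md p‖ ≤ c * ‖Hd p‖} :=
      isClosed_le Md.continuous.norm (continuous_const.mul Hd.continuous.norm)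
    have hmemS : ‖Md h‖ ≤ c * ‖Hd h‖ := by
      have hsub : (C : Set F) ⊆ {p : F | ‖Md p‖ ≤ c * ‖Hd p‖} := by
        rw [hC, Submodule.topologicalClosure_coe]
        apply hSclosed.closure_subset_iff.mpr
        rintro p ⟨w, rfl⟩
        exact hran w
      exact hsub (C.orthogonalProjection y).2
    have e1 : Md y = Md h := by
      have := hMdz; rw [map_sub, sub_eq_zero] at this; exact this
    have e2 : Hd y = Hd h := by
      have := hHdz; rw [map_sub, sub_eq_zero] at this; exact this
    rw [e1, e2]; exact hmemS
  -- well-definedness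
  have hwd : ∀ y y' : F, Hd y = Hd y' → Md y = Md y' := by
    intro y y' hyy
    have h0 : Hd (y - y') = 0 := by rw [map_sub, hyy, sub_self]
    have := hker _ h0; rw [map_sub, sub_eq_zero] at this; exact this
  set S : Submodule ℂ E := LinearMap.range (Hd : F →ₗ[ℂ] E) with hS
  have hmem : ∀ v : S, ∃ y : F, Hd y = (v : E) := fun v => v.2
  set φ₀ : S →ₗ[ℂ] W :=
    { toFun := fun v => Md (hmem v).choose
      map_add' := by
        intro v w
        apply hwd ((hmem (v + w)).choose) ((hmem v).choose + (hmem w).choose) ?_ |>.trans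
        · rw [map_add]
        · rw [map_add, (hmem (v + w)).choose_spec, (hmem v).choose_spec,
            (hmem w).choose_spec]
          rfl
      map_smul' := by
        intro a v
        apply hwd ((hmem (a • v)).choose) (a • (hmem v).choose) ?_ |>.trans
        · rw [map_smul]; rfl
        · rw [map_smul, (hmem (a • v)).choose_spec, (hmem v).choose_spec]
          rfl } with hφ₀
  have hφ₀eval : ∀ y : F, φ₀ ⟨Hd y, LinearMap.mem_range_self _ y⟩ = Md y := by
    intro y
    exact hwd _ _ ((hmem ⟨Hd y, LinearMap.mem_range_self _ y⟩).choose_spec)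
  have hφ₀bound : ∀ v : S, ‖φ₀ v‖ ≤ c * ‖v‖ := by
    intro v
    have h1 : Hd ((hmem v).choose) = (v : E) := (hmem v).choose_spec
    have := hglob ((hmem v).choose)
    rw [h1] at this
    simpa [hφ₀] using this
  set φ : S →L[ℂ] W := φ₀.mkContinuous c hφ₀bound with hφ
  set J : Submodule ℂ E := S.topologicalClosure with hJ
  haveI : CompleteSpace J := (Submodule.isClosed_topologicalClosure _).completeSpace_coe
  have hSJ : S ≤ J := Submodule.le_topologicalClosure _
  set eincl : S →L[ℂ] J :=
    { toLinearMap := Submodule.inclusion hSJ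
      cont := by
        apply continuous_induced_rng.mpr
        exact continuous_subtype_val } with he
  have he_norm : ∀ v : S, ‖eincl v‖ = ‖v‖ := fun v => rfl
  have he_isom : Isometry eincl :=
    AddMonoidHomClass.isometry_of_norm _ he_norm
  have he_dense : DenseRange eincl := by
    intro j
    rw [Metric.mem_closure_iff]
    intro ε hε
    have hj : (j : E) ∈ closure (S : Set E) := by
      rw [← Submodule.topologicalClosure_coe]; exact j.2
    rcases Metric.mem_closure_iff.mp hj ε hε with ⟨s, hsS, hs⟩
    exact ⟨eincl ⟨s, hsS⟩, Set.mem_range_self _, by rwa [Subtype.dist_eq]⟩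
  set Φ₁ : J →L[ℂ] W := φ.extend eincl with hΦ₁
  refine ⟨Φ₁ ∘L (J.orthogonalProjection : E →L[ℂ] J), ?_⟩
  intro y
  have hmemJ : Hd y ∈ J := hSJ (LinearMap.mem_range_self _ y)
  have hproj : J.orthogonalProjection (Hd y) = (⟨Hd y, hmemJ⟩ : J) :=
    Submodule.orthogonalProjection_mem_subspace_eq_self (⟨Hd y, hmemJ⟩ : J)
  have heincl : eincl ⟨Hd y, LinearMap.mem_range_self _ y⟩ = (⟨Hd y, hmemJ⟩ : J) := rfl
  rw [ContinuousLinearMap.comp_apply, hproj, ← heincl]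
  rw [ContinuousLinearMap.extend_eq _ he_dense he_isom.isUniformInducing]
  show φ₀ _ = _
  exact hφ₀eval y

/-- Quadratic form computation. -/
lemma quad_re {E W : Type}
    [NormedAddCommGroup E] [InnerProductSpace ℂ E] [CompleteSpace E]
    [NormedAddCommGroup W] [InnerProductSpace ℂ W] [CompleteSpace W]
    (c : ℝ) (G : E →L[ℂ] E) (L : E →L[ℂ] W) (hG : adjoint G = G) (w : E) :
    (((c : ℂ) ^ 2 • (G ^ 2) - adjoint L ∘L L)).reApplyInnerSelf w
      = c ^ 2 * ‖G w‖ ^ 2 - ‖L w‖ ^ 2 := by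
  rw [ContinuousLinearMap.reApplyInnerSelf_apply]
  have h1 : ((c : ℂ) ^ 2 • (G ^ 2) - adjoint L ∘L L) w
      = (c : ℂ) ^ 2 • (G (G w)) - adjoint L (L w) := by
    simp [pow_two, ContinuousLinearMap.mul_apply]
  rw [h1, inner_sub_left, inner_smul_left]
  have h2 : (inner ℂ (G (G w)) w : ℂ) = inner ℂ (G w) (G w) := by
    calc (inner ℂ (G (G w)) w : ℂ) = inner ℂ (adjoint G (G w)) w := by rw [hG]
      _ = inner ℂ (G w) (G w) := adjoint_inner_left _ _ _
  have h3 : (inner ℂ (adjoint L (L w)) w : ℂ) = inner ℂ (L w) (L w) := by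
    rw [adjoint_inner_left]
  rw [h2, h3, inner_self_eq_norm_sq_to_K, inner_self_eq_norm_sq_to_K]
  simp [Complex.conj_ofReal, ← Complex.ofReal_pow, ← Complex.ofReal_mul, RCLike.ofReal_re]

lemma l2_norm_sq (f : l2) : ‖f‖ ^ 2 = ∑' k : ℕ, ‖f k‖ ^ 2 := by
  have h2 : (0:ℝ) < (2 : ℝ≥0∞).toReal := by norm_num
  have h := lp.norm_rpow_eq_tsum h2 f
  have h3 : ∀ r : ℝ, r ^ ((2 : ℝ≥0∞).toReal) = r ^ 2 := fun r => by
    rw [show ((2 : ℝ≥0∞).toReal) = ((2:ℕ):ℝ) by norm_num, Real.rpow_natCast]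
  rw [h3] at h
  simp only [h3] at h
  exact h

variable {X : Type} [NormedAddCommGroup X] [InnerProductSpace ℂ X] [CompleteSpace X]
variable {U : Type} [NormedAddCommGroup U] [InnerProductSpace ℂ U] [CompleteSpace U]

def HopD (Ξ0 : l2 →L[ℂ] X) (Υ0 : l2 →L[ℂ] U) : l2 →L[ℂ] WithLp 2 (X × U) :=
  (WithLp.prodContinuousLinearEquiv 2 ℂ X U).symm.toContinuousLinearMap ∘L (Ξ0.prod Υ0)

def HdD (Ξ0 : l2 →L[ℂ] X) (Υ0 : l2 →L[ℂ] U) : WithLp 2 (X × U) →L[ℂ] l2 :=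
  ((adjoint Ξ0) ∘L (ContinuousLinearMap.fst ℂ X U)
    + (adjoint Υ0) ∘L (ContinuousLinearMap.snd ℂ X U)) ∘L
    (WithLp.prodContinuousLinearEquiv 2 ℂ X U).toContinuousLinearMap

def MdD (K : X →L[ℂ] U) : WithLp 2 (X × U) →L[ℂ] X :=
  ((ContinuousLinearMap.fst ℂ X U) + (adjoint K) ∘L (ContinuousLinearMap.snd ℂ X U)) ∘L
    (WithLp.prodContinuousLinearEquiv 2 ℂ X U).toContinuousLinearMap

lemma HopD_fst (Ξ0 : l2 →L[ℂ] X) (Υ0 : l2 →L[ℂ] U) (w : l2) :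
    (HopD Ξ0 Υ0 w).fst = Ξ0 w := rfl
lemma HopD_snd (Ξ0 : l2 →L[ℂ] X) (Υ0 : l2 →L[ℂ] U) (w : l2) :
    (HopD Ξ0 Υ0 w).snd = Υ0 w := rfl
lemma HdD_apply (Ξ0 : l2 →L[ℂ] X) (Υ0 : l2 →L[ℂ] U) (y : WithLp 2 (X × U)) :
    HdD Ξ0 Υ0 y = adjoint Ξ0 y.fst + adjoint Υ0 y.snd := rfl
lemma MdD_apply (K : X →L[ℂ] U) (y : WithLp 2 (X × U)) :
    MdD K y = y.fst + adjoint K y.snd := rfl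

lemma hadj_check (Ξ0 : l2 →L[ℂ] X) (Υ0 : l2 →L[ℂ] U) (y : WithLp 2 (X × U)) (w : l2) :
    (inner ℂ (HdD Ξ0 Υ0 y) w : ℂ) = inner ℂ y (HopD Ξ0 Υ0 w) := by
  rw [HdD_apply, inner_add_left, adjoint_inner_left, adjoint_inner_left,
    WithLp.prod_inner_apply]
  rfl

theorem stmt_8
    {X : Type} [NormedAddCommGroup X] [InnerProductSpace ℂ X] [CompleteSpace X] [Nontrivial X]
    {U : Type} [NormedAddCommGroup U] [InnerProductSpace ℂ U] [CompleteSpace U] [Nontrivial U]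
    (x1 x0 : ℕ → X) (u0 : ℕ → U)
    (hx1B : Bessel x1) (hx0B : Bessel x0) (hu0B : Bessel u0)
    (Ξ1 Ξ0 : l2 →L[ℂ] X) (Υ0 : l2 →L[ℂ] U)
    (hΞ1 : IsSynthesis x1 Ξ1) (hΞ0 : IsSynthesis x0 Ξ0) (hΥ0 : IsSynthesis u0 Υ0)
    (As : X →L[ℂ] X) (Bs : U →L[ℂ] X)
    (hgen : ∀ k : ℕ, x1 k = As (x0 k) + Bs (u0 k))
    (γ : ℝ) (hγ0 : 0 < γ) (hγ1 : γ < 1) :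
    -- (i)
    ((∃ (K : X →L[ℂ] U) (M : ℝ), 1 ≤ M ∧ ∀ (A : X →L[ℂ] X) (B : U →L[ℂ] X),
          (∀ k : ℕ, x1 k = A (x0 k) + B (u0 k)) →
          ∀ k : ℕ, ‖(A + B.comp K) ^ k‖ ≤ M * γ ^ k) ∧
      (∃ (c : ℝ) (K : X →L[ℂ] U), 0 ≤ c ∧
        (∃ M : ℝ, 1 ≤ M ∧ ∀ (A : X →L[ℂ] X) (B : U →L[ℂ] X),
            (∀ k : ℕ, x1 k = A (x0 k) + B (u0 k)) →
            ∀ k : ℕ, ‖(A + B.comp K) ^ k‖ ≤ M * γ ^ k) ∧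
        -- (Ξ0 + K*Υ0)*(Ξ0 + K*Υ0) ≤ c² (Ξ0*Ξ0 + Υ0*Υ0)²
        ((c ^ 2 : ℂ) • ((adjoint Ξ0 ∘L Ξ0 + adjoint Υ0 ∘L Υ0) ^ 2)
            - adjoint (Ξ0 + (adjoint K) ∘L Υ0) ∘L (Ξ0 + (adjoint K) ∘L Υ0)).IsPositive))
    ↔
    -- (ii)
    (IsFrame x0 ∧
      ∃ Ξd : X →L[ℂ] l2, Ξ0 ∘L Ξd = ContinuousLinearMap.id ℂ X ∧
        ∃ M : ℝ, 1 ≤ M ∧ ∀ k : ℕ, ‖(Ξ1 ∘L Ξd) ^ k‖ ≤ M * γ ^ k) := by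
  classical
  have hs0 : ∀ k : ℕ, Ξ0 (lp.single 2 k 1) = x0 k := syn_single hΞ0
  have hsU : ∀ k : ℕ, Υ0 (lp.single 2 k 1) = u0 k := syn_single hΥ0
  have hAB : ∀ (A : X →L[ℂ] X) (B : U →L[ℂ] X), (∀ k, x1 k = A (x0 k) + B (u0 k)) →
      ∀ w : l2, Ξ1 w = A (Ξ0 w) + B (Υ0 w) := by
    intro A B hcons w
    have hA : HasSum (fun k : ℕ => w k • A (x0 k)) (A (Ξ0 w)) := by
      have := (hΞ0 w).mapL A
      simpa using this
    have hB : HasSum (fun k : ℕ => w k • B (u0 k)) (B (Υ0 w)) := by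
      have := (hΥ0 w).mapL B
      simpa using this
    have h13 : (fun k : ℕ => w k • x1 k) = fun k => w k • A (x0 k) + w k • B (u0 k) := by
      funext k; rw [hcons k, smul_add]
    refine (hΞ1 w).unique ?_
    rw [h13]
    exact hA.add hB
  have hGadj : adjoint (adjoint Ξ0 ∘L Ξ0 + adjoint Υ0 ∘L Υ0)
      = adjoint Ξ0 ∘L Ξ0 + adjoint Υ0 ∘L Υ0 := by
    rw [map_add, adjoint_comp, adjoint_comp, adjoint_adjoint, adjoint_adjoint]
  constructor
  · rintro ⟨-, c, K, hc, ⟨M, hM, hst⟩, hpos⟩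
    set G : l2 →L[ℂ] l2 := adjoint Ξ0 ∘L Ξ0 + adjoint Υ0 ∘L Υ0 with hG
    set L : l2 →L[ℂ] X := Ξ0 + (adjoint K) ∘L Υ0 with hL
    have hLnorm : ∀ w : l2, ‖L w‖ ≤ c * ‖G w‖ := by
      intro w
      have h0 := hpos.2 w
      rw [quad_re c G L hGadj w] at h0
      nlinarith [norm_nonneg (L w), norm_nonneg (G w), mul_nonneg hc (norm_nonneg (G w)),
        sq_nonneg (‖L w‖ + c * ‖G w‖)]
    obtain ⟨v₀, hv0ne⟩ := exists_ne (0 : X)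
    have hv0 : 0 < ‖v₀‖ := norm_pos_iff.mpr hv0ne
    -- kernel condition via the perturbation argument
    have hker : ∀ y : WithLp 2 (X × U), HdD Ξ0 Υ0 y = 0 → MdD K y = 0 := by
      intro y hy
      rw [HdD_apply] at hy
      rw [MdD_apply]
      set a : X := y.fst with ha
      set b : U := y.snd with hb
      set ξ : X := a + adjoint K b with hξ
      show ξ = 0
      have hip : ∀ k : ℕ, (inner ℂ a (x0 k) : ℂ) + inner ℂ b (u0 k) = 0 := by
        intro k
        have h14 : (inner ℂ (adjoint Ξ0 a + adjoint Υ0 b) (lp.single 2 k (1:ℂ) : l2) : ℂ) = 0 := by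
          rw [hy, inner_zero_left]
        rwa [inner_add_left, adjoint_inner_left, adjoint_inner_left, hs0, hsU] at h14
      have hper : ∀ n : ℕ, ‖ξ‖ ^ 2 * ‖v₀‖ * n ≤ (M * γ + ‖As + Bs ∘L K‖) * ‖ξ‖ := by
        intro n
        set ΔA : X →L[ℂ] X := (innerSL ℂ a).smulRight v₀ with hΔA
        set ΔB : U →L[ℂ] X := (innerSL ℂ b).smulRight v₀ with hΔB
        have hzero : ∀ k : ℕ, ΔA (x0 k) + ΔB (u0 k) = 0 := by
          intro k
          rw [hΔA, hΔB]
          simp only [ContinuousLinearMap.smulRight_apply, innerSL_apply_apply]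
          rw [← add_smul, hip k, zero_smul]
        have hcons : ∀ k : ℕ, x1 k = (As + (n:ℂ) • ΔA) (x0 k) + (Bs + (n:ℂ) • ΔB) (u0 k) := by
          intro k
          have h4 : (n:ℂ) • ΔA (x0 k) + (n:ℂ) • ΔB (u0 k) = 0 := by
            rw [← smul_add, hzero k, smul_zero]
          calc x1 k = As (x0 k) + Bs (u0 k) := hgen k
            _ = (As + (n:ℂ) • ΔA) (x0 k) + (Bs + (n:ℂ) • ΔB) (u0 k) := by
                simp only [ContinuousLinearMap.add_apply, ContinuousLinearMap.smul_apply]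
                rw [add_add_add_comm, h4, add_zero]
        have hb1 := hst _ _ hcons 1
        rw [pow_one] at hb1
        have hipξ : (inner ℂ a ξ : ℂ) + inner ℂ b (K ξ) = ((‖ξ‖ : ℂ) ^ 2) := by
          rw [← adjoint_inner_left K, ← inner_add_left, ← hξ, inner_self_eq_norm_sq_to_K]
          norm_cast
        have heval : ((As + (n:ℂ) • ΔA) + (Bs + (n:ℂ) • ΔB) ∘L K) ξ
            = (As + Bs ∘L K) ξ + (n:ℂ) • (((‖ξ‖ : ℂ) ^ 2) • v₀) := by
          have h15 : (n:ℂ) • ((inner ℂ a ξ : ℂ) • v₀) + (n:ℂ) • ((inner ℂ b (K ξ) : ℂ) • v₀)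
              = (n:ℂ) • (((‖ξ‖ : ℂ) ^ 2) • v₀) := by
            rw [← smul_add, ← add_smul, hipξ]
          simp only [ContinuousLinearMap.add_apply, ContinuousLinearMap.comp_apply,
            ContinuousLinearMap.smul_apply, hΔA, hΔB, ContinuousLinearMap.smulRight_apply,
            innerSL_apply_apply]
          rw [add_add_add_comm, h15]
        have hnn : ‖(n:ℂ) • (((‖ξ‖ : ℂ) ^ 2) • v₀)‖ = ‖ξ‖ ^ 2 * ‖v₀‖ * n := by
          rw [norm_smul, norm_smul]
          simp [Complex.norm_natCast]
          ring
        have h11 : ‖((As + (n:ℂ) • ΔA) + (Bs + (n:ℂ) • ΔB) ∘L K) ξ‖ ≤ (M * γ) * ‖ξ‖ := by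
          calc ‖((As + (n:ℂ) • ΔA) + (Bs + (n:ℂ) • ΔB) ∘L K) ξ‖
              ≤ ‖(As + (n:ℂ) • ΔA) + (Bs + (n:ℂ) • ΔB) ∘L K‖ * ‖ξ‖ := le_opNorm _ _
            _ ≤ (M * γ) * ‖ξ‖ := mul_le_mul_of_nonneg_right (by simpa using hb1) (norm_nonneg _)
        have h12 : ‖(As + Bs ∘L K) ξ‖ ≤ ‖As + Bs ∘L K‖ * ‖ξ‖ := le_opNorm _ _
        calc ‖ξ‖ ^ 2 * ‖v₀‖ * n = ‖(n:ℂ) • (((‖ξ‖ : ℂ) ^ 2) • v₀)‖ := hnn.symm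
          _ = ‖((As + (n:ℂ) • ΔA) + (Bs + (n:ℂ) • ΔB) ∘L K) ξ - (As + Bs ∘L K) ξ‖ := by
              rw [heval, add_sub_cancel_left]
          _ ≤ ‖((As + (n:ℂ) • ΔA) + (Bs + (n:ℂ) • ΔB) ∘L K) ξ‖ + ‖(As + Bs ∘L K) ξ‖ :=
              norm_sub_le _ _
          _ ≤ (M * γ) * ‖ξ‖ + ‖As + Bs ∘L K‖ * ‖ξ‖ := add_le_add h11 h12
          _ = (M * γ + ‖As + Bs ∘L K‖) * ‖ξ‖ := by ring
      by_contra hne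
      have hξpos : 0 < ‖ξ‖ := norm_pos_iff.mpr hne
      obtain ⟨n, hn⟩ :=
        exists_nat_gt (((M * γ + ‖As + Bs ∘L K‖) * ‖ξ‖) / (‖ξ‖ ^ 2 * ‖v₀‖))
      rw [div_lt_iff₀ (by positivity)] at hn
      have := hper n
      nlinarith
    have hran : ∀ w : l2, ‖MdD K (HopD Ξ0 Υ0 w)‖ ≤ c * ‖HdD Ξ0 Υ0 (HopD Ξ0 Υ0 w)‖ := by
      intro w
      have e1 : MdD K (HopD Ξ0 Υ0 w) = L w := by
        rw [MdD_apply, HopD_fst, HopD_snd, hL]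
        simp [ContinuousLinearMap.add_apply, ContinuousLinearMap.comp_apply]
      have e2 : HdD Ξ0 Υ0 (HopD Ξ0 Υ0 w) = G w := by
        rw [HdD_apply, HopD_fst, HopD_snd, hG]
        simp [ContinuousLinearMap.add_apply, ContinuousLinearMap.comp_apply]
      rw [e1, e2]
      exact hLnorm w
    obtain ⟨Φ, hΦ⟩ := douglas_factor (HopD Ξ0 Υ0) (HdD Ξ0 Υ0) (MdD K) c
      (hadj_check Ξ0 Υ0) hker hran
    have hW : ∀ (aa : X) (bb : U), Φ (adjoint Ξ0 aa + adjoint Υ0 bb) = aa + adjoint K bb := by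
      intro aa bb
      have := hΦ ((WithLp.equiv 2 (X × U)).symm (aa, bb))
      rwa [HdD_apply, MdD_apply] at this
    set Ξd : X →L[ℂ] l2 := adjoint Φ with hΞdd
    have hrid : ∀ x : X, Ξ0 (Ξd x) = x := by
      intro x
      apply ext_inner_left ℂ
      intro v
      have h16 : Φ (adjoint Ξ0 v) = v := by simpa using hW v 0
      calc (inner ℂ v (Ξ0 (Ξd x)) : ℂ)
          = inner ℂ (adjoint Ξ0 v) (Ξd x) := (adjoint_inner_left _ _ _).symm
        _ = inner ℂ (Φ (adjoint Ξ0 v)) x := adjoint_inner_right _ _ _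
        _ = inner ℂ v x := by rw [h16]
    have hKid : ∀ x : X, Υ0 (Ξd x) = K x := by
      intro x
      apply ext_inner_left ℂ
      intro u
      have h17 : Φ (adjoint Υ0 u) = adjoint K u := by simpa using hW 0 u
      calc (inner ℂ u (Υ0 (Ξd x)) : ℂ)
          = inner ℂ (adjoint Υ0 u) (Ξd x) := (adjoint_inner_left _ _ _).symm
        _ = inner ℂ (Φ (adjoint Υ0 u)) x := adjoint_inner_right _ _ _
        _ = inner ℂ (adjoint K u) x := by rw [h17]
        _ = inner ℂ u (K x) := adjoint_inner_left _ _ _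
    constructor
    · -- frame
      obtain ⟨α, hα, hbes⟩ := hx0B
      refine ⟨α, (‖Φ‖ + 1)⁻¹ ^ 2, hα, by positivity, ?_⟩
      intro x
      have hnorm2 : ∑' k : ℕ, ‖(inner ℂ x (x0 k) : ℂ)‖ ^ 2 = ‖adjoint Ξ0 x‖ ^ 2 := by
        have hcoord : ∀ k : ℕ, ‖(adjoint Ξ0 x) k‖ = ‖(inner ℂ x (x0 k) : ℂ)‖ := by
          intro k
          have h6 : (inner ℂ (adjoint Ξ0 x) (lp.single 2 k (1:ℂ) : l2) : ℂ) = inner ℂ x (x0 k) := by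
            rw [adjoint_inner_left, hs0]
          rw [lp.inner_single_right] at h6
          have h8 := congrArg norm h6
          simpa [RCLike.inner_apply, RCLike.norm_conj] using h8
        rw [l2_norm_sq]
        exact tsum_congr fun k => by rw [hcoord k]
      have hxb : ‖x‖ ≤ (‖Φ‖ + 1) * ‖adjoint Ξ0 x‖ := by
        have h8 : Φ (adjoint Ξ0 x) = x := by simpa using hW x 0
        calc ‖x‖ = ‖Φ (adjoint Ξ0 x)‖ := by rw [h8]
          _ ≤ ‖Φ‖ * ‖adjoint Ξ0 x‖ := le_opNorm _ _
          _ ≤ (‖Φ‖ + 1) * ‖adjoint Ξ0 x‖ :=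
              mul_le_mul_of_nonneg_right (by linarith) (norm_nonneg _)
      refine ⟨?_, hbes x⟩
      rw [hnorm2]
      have ht : (0:ℝ) < ‖Φ‖ + 1 := by positivity
      have h9 : ‖x‖ ^ 2 ≤ (‖Φ‖ + 1) ^ 2 * ‖adjoint Ξ0 x‖ ^ 2 := by
        nlinarith [norm_nonneg x, norm_nonneg (adjoint Ξ0 x)]
      rw [inv_pow, inv_mul_le_iff₀ (by positivity)]
      linarith
    · refine ⟨Ξd, ?_, M, hM, ?_⟩
      · ext x
        simpa using hrid x
      · intro k
        have hFeq : Ξ1 ∘L Ξd = As + Bs.comp K := by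
          ext x
          simp only [ContinuousLinearMap.comp_apply, ContinuousLinearMap.add_apply]
          rw [hAB As Bs hgen (Ξd x), hrid x, hKid x]
        rw [hFeq]
        exact hst As Bs hgen k
  · rintro ⟨hframe, Ξd, hΞd, M, hM, hMk⟩
    have hrid : ∀ x : X, Ξ0 (Ξd x) = x := by
      intro x
      have := ContinuousLinearMap.ext_iff.mp hΞd x
      simpa using this
    set K : X →L[ℂ] U := Υ0 ∘L Ξd with hK
    have hstab : ∀ (A : X →L[ℂ] X) (B : U →L[ℂ] X), (∀ k, x1 k = A (x0 k) + B (u0 k)) →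
        ∀ k : ℕ, ‖(A + B.comp K) ^ k‖ ≤ M * γ ^ k := by
      intro A B hcons k
      have hclosed : A + B.comp K = Ξ1 ∘L Ξd := by
        ext x
        simp only [ContinuousLinearMap.add_apply, ContinuousLinearMap.comp_apply, hK]
        rw [hAB A B hcons (Ξd x), hrid x]
      rw [hclosed]
      exact hMk k
    refine ⟨⟨K, M, hM, hstab⟩, ‖adjoint Ξd‖ + 1, K, by positivity, ⟨M, hM, hstab⟩, ?_⟩
    set G : l2 →L[ℂ] l2 := adjoint Ξ0 ∘L Ξ0 + adjoint Υ0 ∘L Υ0 with hG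
    set L : l2 →L[ℂ] X := Ξ0 + (adjoint K) ∘L Υ0 with hL
    have hLG : ∀ w : l2, L w = adjoint Ξd (G w) := by
      intro w
      have hKadj : adjoint K = adjoint Ξd ∘L adjoint Υ0 := by rw [hK, adjoint_comp]
      have hid2 : adjoint Ξd ∘L adjoint Ξ0 = ContinuousLinearMap.id ℂ X := by
        rw [← adjoint_comp, hΞd, adjoint_id]
      have h18 : adjoint Ξd (adjoint Ξ0 (Ξ0 w)) = Ξ0 w := by
        have := ContinuousLinearMap.ext_iff.mp hid2 (Ξ0 w)
        simpa using this
      calc L w = Ξ0 w + adjoint K (Υ0 w) := by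
            rw [hL]; simp [ContinuousLinearMap.add_apply, ContinuousLinearMap.comp_apply]
        _ = adjoint Ξd (adjoint Ξ0 (Ξ0 w)) + adjoint Ξd (adjoint Υ0 (Υ0 w)) := by
            rw [hKadj, h18]; rfl
        _ = adjoint Ξd (G w) := by
            rw [← map_add]
            rfl
    refine ⟨?_, ?_⟩
    · -- self-adjointness
      apply IsSelfAdjoint.isSymmetric
      apply IsSelfAdjoint.sub
      · refine IsSelfAdjoint.smul ?_ ((isSelfAdjoint_iff'.mpr hGadj).pow 2)
        show star _ = _
        rw [star_pow, Complex.star_def, Complex.conj_ofReal]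
      · exact isSelfAdjoint_iff'.mpr (by rw [adjoint_comp, adjoint_adjoint])
    · intro w
      rw [quad_re (‖adjoint Ξd‖ + 1) G L hGadj w]
      have h10 : ‖L w‖ ≤ (‖adjoint Ξd‖ + 1) * ‖G w‖ := by
        rw [hLG w]
        calc ‖adjoint Ξd (G w)‖ ≤ ‖adjoint Ξd‖ * ‖G w‖ := le_opNorm _ _
          _ ≤ _ := mul_le_mul_of_nonneg_right (by linarith) (norm_nonneg _)
      nlinarith [norm_nonneg (L w), norm_nonneg (G w)]
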